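/- arXiv:0803.2901 — 2 statements merged into one kernel-verified Lean document; each statement's English description precedes it below -/
import Mathlib

section
/- For every n ≥ 4 and every λ_1 with 2 ≤ λ_1 ≤ n−2, the near-hook partition (λ_1, 2, 1^{n−λ_1−2}) satisfies η_{(λ_1,2,1^{n−λ_1−2})} = (n−1)·((−1)^{n−1} + (−1)^{n+λ_1}·λ_1·D_{λ_1−2}); equivalently, (λ_1−1)·η_{(λ_1,2,1^{n−λ_1−2})} = (−1)^{n+λ_1}·(n−1)·D_{λ_1}. -/
/-- Derangement numbers: `D 0 = 1`, `D (m+1) = (m+1) * D m + (-1)^(m+1)`. -/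
def derange : ℕ → ℤ
  | 0 => 1
  | n + 1 => (n + 1 : ℤ) * derange n + (-1) ^ (n + 1)

/-- Subtract one from every part and discard the parts that become zero
(deleting the first column of the Ferrers diagram). -/
def strip (l : List ℕ) : List ℕ := (l.map (· - 1)).filter (fun x => 0 < x)

lemma strip_measure (l : List ℕ) : (strip l).sum + (strip l).length ≤ l.sum := by
  induction l with
  | nil => simp [strip]
  | cons x t ih =>
      simp only [strip, List.map_cons, List.filter_cons] at ih ⊢
      by_cases hx : 0 < x - 1 <;> simp [hx] <;> omega

/-- The eigenvalues of the derangement graph, defined by Renteln's recurrence: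
`η ∅ = 1` and `η λ = (-1)^h (η (λ-ĥ) + (-1)^{λ₁} h η (λ-ĉ))`, where
`h = λ₁ + r - 1` is the hook size, `λ-ĥ = strip (tail λ)` removes the hook,
and `λ-ĉ = strip λ` removes the first column. -/
def eta : List ℕ → ℤ
  | [] => 1
  | a :: t =>
      (-1) ^ (a + t.length) *
        (eta (strip t) + (-1) ^ a * ((a : ℤ) + t.length) * eta (strip (a :: t)))
  termination_by l => l.sum + l.length
  decreasing_by
  · have h1 := strip_measure t
    simp only [List.sum_cons, List.length_cons]
    omega
  · have h1 := strip_measure (a :: t)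
    simp only [List.sum_cons, List.length_cons] at h1 ⊢
    omega

/-- `l` is (the list of parts of) a partition of `n`: weakly decreasing,
all parts positive, summing to `n`. -/
def IsPartition (n : ℕ) (l : List ℕ) : Prop :=
  l.Pairwise (· ≥ ·) ∧ (∀ x ∈ l, 0 < x) ∧ l.sum = n

/-- The hook partition `(a, 1^(n-a))` of `n`. -/
def hookP (n a : ℕ) : List ℕ := a :: List.replicate (n - a) 1

lemma eta_cons (a : ℕ) (t : List ℕ) : eta (a :: t) =
    (-1) ^ (a + t.length) *
      (eta (strip t) + (-1) ^ a * ((a : ℤ) + t.length) * eta (strip (a :: t))) := by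
  rw [eta]

lemma strip_rep (k : ℕ) : strip (List.replicate k 1) = [] := by
  simp [strip, List.filter_eq_nil_iff, List.eq_of_mem_replicate]

lemma eta_single (m : ℕ) : eta [m] = derange m := by
  induction m with
  | zero => rw [eta_cons]; simp [strip, eta, derange]
  | succ b ih =>
      rw [eta_cons]
      rcases Nat.eq_zero_or_pos b with hb | hb
      · subst hb; simp [strip, eta, derange]
      · have hs : strip [b+1] = [b] := by
          simp [strip]; omega
        rw [hs, ih]
        show _ = derange (b+1)
        rw [derange]
        simp [strip, eta, pow_succ]
        ring_nf
        have h2 : ((-1:ℤ))^(b*2) = 1 := by rw [mul_comm, pow_mul]; norm_num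
        rw [h2]; ring


lemma eta_nil : eta [] = 1 := by rw [eta]

lemma eta_hook2 (c : ℕ) : eta [c+1, 1] = (-1)^c - ((c:ℤ)+2) * derange c := by
  rw [eta_cons]
  have h1 : strip [1] = [] := by simp [strip]
  have h2 : eta (strip [c+1, 1]) = derange c := by
    rcases Nat.eq_zero_or_pos c with hc | hc
    · subst hc; simp [strip, eta, derange]
    · have : strip [c+1, 1] = [c] := by simp [strip, hc]
      rw [this, eta_single]
  rw [h1, h2, eta_nil]
  simp only [List.length_cons, List.length_nil]
  push_cast
  have p1 : ((-1:ℤ))^(c+1+1) = (-1)^c := by rw [pow_succ, pow_succ]; ring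
  rw [p1]
  ring_nf
  have q : ((-1:ℤ))^(c*2) = 1 := by rw [mul_comm, pow_mul]; norm_num
  rw [q]; ring
/-- Near-hook eigenvalues: for `n ≥ 4` and `2 ≤ a ≤ n-2`,
`η_{(a,2,1^{n-a-2})} = (n-1)((-1)^{n-1} + (-1)^{n+a} a D_{a-2})`; equivalently
`(a-1) η_{(a,2,1^{n-a-2})} = (-1)^{n+a} (n-1) D_a`. -/
theorem eta_nearhook_formula (n a : ℕ) (hn : 4 ≤ n) (ha : 2 ≤ a) (han : a ≤ n - 2) :
    eta (a :: 2 :: List.replicate (n - a - 2) 1) =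
      ((n : ℤ) - 1) * ((-1) ^ (n - 1) + (-1) ^ (n + a) * (a : ℤ) * derange (a - 2)) ∧
    ((a : ℤ) - 1) * eta (a :: 2 :: List.replicate (n - a - 2) 1) =
      (-1) ^ (n + a) * ((n : ℤ) - 1) * derange a := by
  obtain ⟨b, rfl⟩ : ∃ b, a = b + 2 := ⟨a - 2, by omega⟩
  obtain ⟨k, rfl⟩ : ∃ k, n = b + 2 + k + 2 := ⟨n - b - 4, by omega⟩
  have hk : b + 2 + k + 2 - (b + 2) - 2 = k := by omega
  rw [hk, eta_cons]
  have h1 : strip (2 :: List.replicate k 1) = [1] := by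
    simp only [strip, List.map_cons, List.map_replicate, List.filter_cons]
    norm_num
  have h2 : strip ((b + 2) :: 2 :: List.replicate k 1) = [b+1, 1] := by
    simp only [strip, List.map_cons, List.map_replicate, List.filter_cons]
    norm_num
  have h3 : eta [1] = 0 := by rw [eta_single]; rfl
  rw [h1, h2, h3, eta_hook2]
  simp only [List.length_cons, List.length_replicate]
  have e6 : b + 2 - 2 = b := by omega
  rw [e6]
  have d2 : derange (b+2) = ((b:ℤ)+2)*derange (b+1) + (-1)^b := by
    show derange (b+1+1) = _
    rw [derange, derange]
    have : ((-1:ℤ))^(b+1+1) = (-1)^b := by rw [pow_succ, pow_succ]; ring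
    rw [this]; push_cast; ring
  have d1 : derange (b+1) = ((b:ℤ)+1)*derange b - (-1)^b := by
    rw [derange]
    have : ((-1:ℤ))^(b+1) = -(-1)^b := by rw [pow_succ]; ring
    rw [this]; push_cast; ring
  rw [d2, d1]
  have p1 : ((-1:ℤ))^(b+2+(k+1)) = -((-1)^b*(-1)^k) := by
    rw [show b+2+(k+1) = (b+k)+3 by omega, pow_add, pow_add]; ring
  have p2 : ((-1:ℤ))^(b+2) = (-1)^b := by rw [pow_add]; norm_num
  have p3 : ((-1:ℤ))^(b+2+k+2-1) = -((-1)^b*(-1)^k) := by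
    rw [show b+2+k+2-1 = (b+k)+3 by omega, pow_add, pow_add]; ring
  have p4 : ((-1:ℤ))^(b+2+k+2+(b+2)) = (-1)^k := by
    rw [show b+2+k+2+(b+2) = 2*(b+3)+k by omega, pow_add, pow_mul]; norm_num
  rw [p1, p2, p3, p4]
  push_cast
  rcases Nat.even_or_odd b with hb | hb <;>
    simp only [hb.neg_one_pow] <;> constructor <;> ring
end

section
/- Let n ≥ 3 and let λ be a partition of n whose first part satisfies 2·λ_1 ≥ n−1. Assume that λ is not the partition (n/2, n/2) when n is even, and that λ does not have exactly three parts with first part equal to (n−1)/2 when n is odd. Then |η_λ| < D_{λ_1+1} + (n−λ_1−1)·D_{λ_1}, where the right-hand side is computed in the integers (so the coefficient n−λ_1−1 may be −1 when λ = (n)). When λ_1 ≤ n−1 the right-hand side equals |η_{(λ_1+1,1^{n−λ_1−1})}|. -/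
section DerangeFacts
lemma derange_succ (n : ℕ) : derange (n+1) = (n+1 : ℤ) * derange n + (-1)^(n+1) := by rw [derange]
lemma derange_one : derange 1 = 0 := by norm_num [derange]
lemma neg_one_pow_bounds (n : ℕ) : -1 ≤ (-1:ℤ)^n ∧ (-1:ℤ)^n ≤ 1 := by
  rcases Nat.even_or_odd n with h | h
  · rw [h.neg_one_pow]; norm_num
  · rw [h.neg_one_pow]; norm_num
lemma derange_ge_one : ∀ m, m ≠ 1 → 1 ≤ derange m := by
  intro m
  induction m with
  | zero => intro _; norm_num [derange]
  | succ n ih =>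
      intro hm
      match n, ih with
      | 0, _ => omega
      | 1, _ => norm_num [derange]
      | (k+2), ih =>
          have h1 := ih (by omega)
          have h2 := neg_one_pow_bounds (k+3)
          rw [derange_succ]; push_cast; nlinarith [h1, h2.1]
lemma derange_nonneg (m : ℕ) : 0 ≤ derange m := by
  rcases eq_or_ne m 1 with h | h
  · simp [h]; norm_num [derange]
  · linarith [derange_ge_one m h]
lemma derange_le_succ (m : ℕ) (hm : 2 ≤ m) : derange m ≤ derange (m+1) := by
  have h1 := derange_ge_one m (by omega)
  have h2 := neg_one_pow_bounds (m+1)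
  rw [derange_succ]
  have h3 : (2:ℤ) ≤ (m:ℤ) := by exact_mod_cast hm
  nlinarith [h2.1]
lemma derange_mono {i j : ℕ} (hij : i ≤ j) (hj : 2 ≤ j) : derange i ≤ derange j := by
  induction j with
  | zero => omega
  | succ n ih =>
      rcases Nat.lt_or_ge n 2 with h | h
      · have hn : n = 1 := by omega
        subst hn; interval_cases i <;> norm_num [derange]
      · rcases Nat.eq_or_lt_of_le hij with h1 | h1
        · rw [h1]
        · exact le_trans (ih (by omega) (by omega)) (derange_le_succ n h)
lemma derange_ge_lin : ∀ m : ℕ, 5 ≤ m → 2*(m:ℤ) + 13 ≤ derange m := by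
  intro m
  induction m with
  | zero => intro h; omega
  | succ n ih =>
      intro h
      rcases Nat.lt_or_ge n 5 with h5 | h5
      · have hn : n = 4 := by omega
        subst hn; norm_num [derange]
      · have h1 := ih h5
        have h2 := neg_one_pow_bounds (n+1)
        rw [derange_succ]
        have h3 : (5:ℤ) ≤ (n:ℤ) := by exact_mod_cast h5
        push_cast; nlinarith [h2.1]
lemma derange_ge_sub_one : ∀ m : ℕ, (m:ℤ) - 1 ≤ derange m := by
  intro m
  match m with
  | 0 => norm_num [derange]
  | 1 => norm_num [derange]
  | 2 => norm_num [derange]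
  | (k+3) =>
      have h1 := derange_ge_one (k+2) (by omega)
      have h2 := neg_one_pow_bounds (k+3)
      rw [derange_succ]; push_cast; nlinarith [h2.1]
end DerangeFacts

section StripFacts

lemma strip_sorted {l : List ℕ} (h : l.Pairwise (· ≥ ·)) : (strip l).Pairwise (· ≥ ·) := by
  apply List.Pairwise.filter
  exact h.map _ (fun a b hab => Nat.sub_le_sub_right hab 1)

lemma strip_pos {l : List ℕ} : ∀ x ∈ strip l, 0 < x := by
  intro x hx
  have := List.of_mem_filter hx
  simpa using this

lemma strip_sum {l : List ℕ} (h : ∀ x ∈ l, 0 < x) : (strip l).sum + l.length = l.sum := by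
  induction l with
  | nil => simp [strip]
  | cons x t ih =>
      have hx := h x (by simp)
      have ih' := ih (fun y hy => h y (by simp [hy]))
      simp only [strip, List.map_cons, List.filter_cons] at ih' ⊢
      by_cases hx1 : 0 < x - 1 <;> simp [hx1] <;> omega

lemma strip_cons {a : ℕ} {t : List ℕ} (ha : 2 ≤ a) : strip (a :: t) = (a-1) :: strip t := by
  simp only [strip, List.map_cons, List.filter_cons]
  have : 0 < a - 1 := by omega
  simp [this]

lemma strip_eq_nil {l : List ℕ} (h : ∀ x ∈ l, x ≤ 1) : strip l = [] := by
  induction l with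
  | nil => simp [strip]
  | cons x t ih =>
      have hx := h x (by simp)
      have h1 : x - 1 = 0 := by omega
      simp only [strip, List.map_cons, List.filter_cons, h1]
      simpa [strip] using ih (fun y hy => h y (by simp [hy]))

lemma strip_bound {l : List ℕ} {a : ℕ} (h : ∀ x ∈ l, x ≤ a) : ∀ y ∈ strip l, y ≤ a - 1 := by
  intro y hy
  have h1 := List.mem_filter.mp hy
  obtain ⟨x, hx, rfl⟩ := List.mem_map.mp h1.1
  exact Nat.sub_le_sub_right (h x hx) 1

end StripFacts

section EtaFacts

lemma eta_row : ∀ m : ℕ, eta [m+1] = derange (m+1) := by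
  intro m
  induction m with
  | zero =>
      rw [eta_cons]
      norm_num [strip, derange]
  | succ n ih =>
      rw [eta_cons]
      have hs : strip [n+2] = [n+1] := by simp [strip]
      rw [hs, ih]
      simp only [List.length_nil, strip, List.map_nil, List.filter_nil, eta_nil]
      rw [derange_succ (n+1)]
      have hp2 : ((-1:ℤ))^(n+2) * (-1)^(n+2) = 1 := by
        rw [← pow_add]
        exact Even.neg_one_pow ⟨n+2, by omega⟩
      push_cast
      ring_nf
      ring_nf at hp2
      rw [show (1+n) = (n+1) from Nat.add_comm 1 n]
      linear_combination ((n:ℤ)+2) * derange (n+1) * hp2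

lemma eta_abs_cons_le (a : ℕ) (t : List ℕ) :
    |eta (a :: t)| ≤ |eta (strip t)| + ((a : ℤ) + t.length) * |eta (strip (a :: t))| := by
  rw [eta_cons, abs_mul, abs_pow, abs_neg, abs_one, one_pow, one_mul]
  refine le_trans (abs_add_le _ _) ?_
  gcongr
  rw [abs_mul, abs_mul, abs_pow, abs_neg, abs_one, one_pow, one_mul]
  have : |((a:ℤ) + t.length)| = (a:ℤ) + t.length := abs_of_nonneg (by positivity)
  rw [this]

end EtaFacts


section LemmaA

lemma length_le_sum {l : List ℕ} (h : ∀ x ∈ l, 0 < x) : l.length ≤ l.sum := by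
  induction l with
  | nil => simp
  | cons x t ih =>
      have hx := h x (by simp)
      have := ih (fun y hy => h y (by simp [hy]))
      simp only [List.length_cons, List.sum_cons]
      omega

lemma sum_eq_length_of_ones {l : List ℕ} (h : ∀ x ∈ l, x = 1) : l.sum = l.length := by
  induction l with
  | nil => simp
  | cons x t ih =>
      have hx := h x (by simp)
      have := ih (fun y hy => h y (by simp [hy]))
      simp only [List.length_cons, List.sum_cons]
      omega

lemma eta_abs_le : ∀ m : ℕ, ∀ l : List ℕ, l.Pairwise (· ≥ ·) → (∀ x ∈ l, 0 < x) →
    l.sum = m → |eta l| ≤ derange m := by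
  intro m
  induction m using Nat.strong_induction_on with
  | _ m IH =>
    intro l hsort hpos hsum
    match l, hsort, hpos, hsum with
    | [], _, _, hsum =>
        simp only [List.sum_nil] at hsum
        subst hsum
        simp [eta_nil, derange]
    | b :: u, hsort, hpos, hsum =>
        have hb : 0 < b := hpos b (by simp)
        have hub : ∀ x ∈ u, x ≤ b := fun x hx => (List.pairwise_cons.mp hsort).1 x hx
        have hupos : ∀ x ∈ u, 0 < x := fun x hx => hpos x (by simp [hx])
        have husort : u.Pairwise (· ≥ ·) := (List.pairwise_cons.mp hsort).2
        match u with
        | [] =>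
            simp only [List.sum_cons, List.sum_nil, Nat.add_zero] at hsum
            subst hsum
            obtain ⟨b', rfl⟩ : ∃ b', b = b' + 1 := ⟨b - 1, by omega⟩
            rw [eta_row b']
            exact le_of_eq (abs_of_nonneg (derange_nonneg _))
        | v :: w =>
          rcases Nat.lt_or_ge b 2 with hb2 | hb2
          · -- b = 1 : all ones
            have hb1 : b = 1 := by omega
            subst hb1
            have hone : ∀ x ∈ v :: w, x = 1 := by
              intro x hx
              have := hub x hx; have := hupos x hx; omega
            have hs1 : strip (v :: w) = [] := strip_eq_nil (fun x hx => le_of_eq (hone x hx))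
            have hs2 : strip (1 :: v :: w) = [] := by
              apply strip_eq_nil
              intro x hx
              rcases List.mem_cons.mp hx with rfl | hx
              · exact le_refl 1
              · exact le_of_eq (hone x hx)
            have hval : eta (1 :: v :: w) = (-1)^(1+(v::w).length) * (-(((v::w).length : ℤ))) := by
              rw [eta_cons, hs1, hs2, eta_nil]
              push_cast
              ring
            rw [hval, abs_mul, abs_pow, abs_neg, abs_one, one_pow, one_mul, abs_neg]
            have hL : |((v::w).length : ℤ)| = ((v::w).length : ℤ) := abs_of_nonneg (by positivity)
            rw [hL]
            have hlen : (v :: w).sum = (v :: w).length := sum_eq_length_of_ones hone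
            have hge := derange_ge_sub_one m
            have hm' : m = 1 + (v::w).length := by
              simp only [List.sum_cons, List.length_cons] at hsum hlen ⊢
              omega
            have hmz : ((m:ℤ)) = 1 + ((v::w).length : ℤ) := by exact_mod_cast hm'
            linarith
          · -- b ≥ 2
            rcases Nat.lt_or_ge m 4 with hm4 | hm4
            · -- m ≤ 3 : l = [2,1]
              have hv : 0 < v := hupos v (by simp)
              have hw : w = [] := by
                cases w with
                | nil => rfl
                | cons z zs =>
                    exfalso
                    have hz : 0 < z := hupos z (by simp)
                    have : b + v + z ≤ (b :: v :: z :: zs).sum := by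
                      simp only [List.sum_cons]
                      omega
                    omega
              subst hw
              simp only [List.sum_cons, List.sum_nil] at hsum
              have hb2' : b = 2 := by
                have hvb := hub v (by simp)
                omega
              have hv1 : v = 1 := by omega
              subst hb2'; subst hv1
              have hm3 : m = 3 := by omega
              subst hm3
              have h1 : strip [1] = [] := strip_eq_nil (by simp)
              have h2 : strip [2, 1] = [1] := by
                rw [strip_cons (by norm_num)]
                simpa using h1
              have e1 : eta [1] = derange 1 := eta_row 0
              rw [eta_cons, h1, h2, eta_nil, e1, derange_one]
              simp
              norm_num [derange]
            · -- m ≥ 4, generic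
              obtain ⟨c, rfl⟩ : ∃ c, m = c + 4 := ⟨m - 4, by omega⟩
              have hbound := eta_abs_cons_le b (v :: w)
              have hsu_sum : (strip (v::w)).sum + (v::w).length = (v::w).sum := strip_sum hupos
              have hsum' : b + (v::w).sum = c + 4 := by
                simp only [List.sum_cons] at hsum ⊢
                omega
              have hlen_le : (v::w).length ≤ (v::w).sum := length_le_sum hupos
              have hL1 : 1 ≤ (v::w).length := by simp
              have hm1 : (strip (v::w)).sum < c + 4 := by omega
              have hIH1 : |eta (strip (v::w))| ≤ derange (strip (v::w)).sum :=
                IH _ hm1 _ (strip_sorted husort) strip_pos rfl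
              have hsc : strip (b :: v :: w) = (b-1) :: strip (v::w) := strip_cons hb2
              have hscsort : ((b-1) :: strip (v::w)).Pairwise (· ≥ ·) :=
                List.pairwise_cons.mpr ⟨strip_bound hub, strip_sorted husort⟩
              have hscpos : ∀ x ∈ (b-1) :: strip (v::w), 0 < x := by
                intro x hx
                rcases List.mem_cons.mp hx with rfl | hx
                · omega
                · exact strip_pos x hx
              have hscsum : ((b-1) :: strip (v::w)).sum = (b-1) + (strip (v::w)).sum := by
                simp
              have hm2 : ((b-1) :: strip (v::w)).sum < c + 4 := by
                rw [hscsum]; omega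
              have hIH2 : |eta (strip (b :: v :: w))| ≤ derange ((b-1) :: strip (v::w)).sum := by
                rw [hsc]
                exact IH _ hm2 _ hscsort hscpos rfl
              have hs1le : (strip (v::w)).sum ≤ c + 2 := by omega
              have hs2le : ((b-1) :: strip (v::w)).sum ≤ c + 2 := by
                rw [hscsum]; omega
              have hmono1 : derange (strip (v::w)).sum ≤ derange (c+2) :=
                derange_mono hs1le (by omega)
              have hmono2 : derange ((b-1) :: strip (v::w)).sum ≤ derange (c+2) :=
                derange_mono hs2le (by omega)
              have hhle : (b:ℤ) + (v::w).length ≤ (c:ℤ) + 4 := by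
                have : b + (v::w).length ≤ c + 4 := by omega
                exact_mod_cast this
              have hD2pos : 1 ≤ derange (c+2) := derange_ge_one _ (by omega)
              have hster : ((b:ℤ) + (v::w).length) * |eta (strip (b :: v :: w))| ≤ ((c:ℤ)+4) * derange (c+2) := by
                have h1 : |eta (strip (b :: v :: w))| ≤ derange (c+2) := le_trans hIH2 hmono2
                have h2 : (0:ℤ) ≤ (b:ℤ) + (v::w).length := by positivity
                nlinarith [abs_nonneg (eta (strip (b :: v :: w)))]
              have final : |eta (b :: v :: w)| ≤ ((c:ℤ)+5) * derange (c+2) := by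
                calc |eta (b :: v :: w)| ≤ |eta (strip (v::w))| + ((b:ℤ) + (v::w).length) * |eta (strip (b :: v :: w))| := hbound
                _ ≤ derange (c+2) + ((c:ℤ)+4) * derange (c+2) := by
                    have := le_trans hIH1 hmono1
                    linarith
                _ = ((c:ℤ)+5) * derange (c+2) := by ring
              refine le_trans final ?_
              rw [show c + 4 = (c+3) + 1 from rfl, derange_succ (c+3), derange_succ (c+2)]
              have s3 := neg_one_pow_bounds (c+2+1)
              have s4 := neg_one_pow_bounds (c+3+1)
              have hc : (0:ℤ) ≤ (c:ℤ) := by positivity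
              have H : ((c:ℤ)^2+6*c+7) * 1 ≤ ((c:ℤ)^2+6*c+7) * derange (c+2) :=
                mul_le_mul_of_nonneg_left hD2pos (by positivity)
              push_cast
              nlinarith [s3.1, s4.1, H, hc]

end LemmaA


section ExactFormulas

lemma eta_pair : ∀ c : ℕ, eta [c+1, c+1] =
    (-1)^(c+1) * (((c:ℤ)+3) * derange (c+1) + (-1)^(c+2)) := by
  intro c
  induction c with
  | zero =>
      have h1 : strip [1] = [] := strip_eq_nil (by simp)
      have h2 : strip [1, 1] = [] := strip_eq_nil (by simp)
      rw [eta_cons, h1, h2, eta_nil]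
      norm_num [derange]
  | succ c ih =>
      have h1 : strip [c+2] = [c+1] := by
        rw [strip_cons (by omega)]
        simp [strip]
      have h2 : strip [c+2, c+2] = [c+1, c+1] := by
        rw [strip_cons (by omega), h1]
        norm_num
      have hrow : eta [c+1] = derange (c+1) := eta_row c
      rw [eta_cons, h2, h1, hrow, ih]
      simp only [List.length_cons, List.length_nil]
      have hD : derange (c+2) = ((c:ℤ)+2) * derange (c+1) + (-1)^(c+2) := by
        rw [derange_succ (c+1)]; push_cast; ring
      rw [hD]
      have hs : ((-1:ℤ))^c * (-1)^c = 1 := by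
        rw [← pow_add]; exact Even.neg_one_pow ⟨c, by ring⟩
      have e1 : ((-1:ℤ))^(c+2+1) = -(-1)^c := by
        rw [pow_succ, pow_succ, pow_succ]; ring
      have e2 : ((-1:ℤ))^(c+2) = (-1)^c := by
        rw [pow_succ, pow_succ]; ring
      have e3 : ((-1:ℤ))^(c+1) = -(-1)^c := by
        rw [pow_succ]; ring
      have e4 : ((-1:ℤ))^(c+1+1) = (-1)^c := by
        rw [pow_succ, pow_succ]; ring
      have e5 : ((-1:ℤ))^(c+1+2) = -(-1)^c := by
        rw [show c+1+2 = c+2+1 from rfl, e1]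
      push_cast
      rw [e1, e2, e3]
      linear_combination ((((c:ℤ)+3)^2 * derange (c+1) * (-1)^c + ((c:ℤ)+3) * (-1)^c * (-1)^c)) * hs

lemma eta_hook (n b : ℕ) (hb : 1 ≤ b) (hbn : b ≤ n) :
    eta (b :: List.replicate (n-b) 1) = (-1)^n * (1 + (-1)^b * (n:ℤ) * derange (b-1)) := by
  have hlen : (List.replicate (n-b) 1).length = n - b := List.length_replicate
  have hones : ∀ x ∈ List.replicate (n-b) 1, x ≤ 1 := by
    intro x hx
    rw [List.eq_of_mem_replicate hx]
  have h1 : strip (List.replicate (n-b) 1) = [] := strip_eq_nil hones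
  have h2 : eta (strip (b :: List.replicate (n-b) 1)) = derange (b-1) := by
    rcases Nat.eq_or_lt_of_le hb with h | h
    · subst h
      have hnil : strip ((1:ℕ) :: List.replicate (n-1) 1) = [] := by
        apply strip_eq_nil
        intro x hx
        rcases List.mem_cons.mp hx with rfl | hx
        · exact le_refl 1
        · exact hones x hx
      rw [hnil, eta_nil]
      norm_num [derange]
    · rw [strip_cons (by omega), h1]
      obtain ⟨b', rfl⟩ : ∃ b', b = b' + 2 := ⟨b - 2, by omega⟩
      have hb' : b' + 2 - 1 = b' + 1 := by omega
      rw [hb']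
      exact eta_row b'
  rw [eta_cons, h1, eta_nil, h2, hlen]
  have hcast : (b:ℤ) + ((n-b:ℕ):ℤ) = (n:ℤ) := by
    push_cast [Nat.cast_sub hbn]
    ring
  have hexp : b + (n - b) = n := by omega
  rw [hexp, hcast]

end ExactFormulas


section Enumeration

/-- fueled version of `eta`, computable by `decide`. -/
def etaC : ℕ → List ℕ → ℤ
  | _, [] => 1
  | 0, _ :: _ => 1
  | (f+1), (a::t) => (-1)^(a+t.length) * (etaC f (strip t) + (-1)^a * ((a:ℤ)+t.length) * etaC f (strip (a::t)))

lemma etaC_eq : ∀ f (l : List ℕ), l.sum + l.length ≤ f → etaC f l = eta l := by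
  intro f
  induction f with
  | zero =>
      intro l hl
      match l, hl with
      | [], _ => rw [eta_nil]; rfl
      | a :: t, hl => simp at hl
  | succ f ih =>
      intro l hl
      match l with
      | [] => rw [eta_nil]; rfl
      | a :: t =>
          simp only [List.sum_cons, List.length_cons] at hl
          have m1 := strip_measure t
          have m2 := strip_measure (a :: t)
          simp only [List.sum_cons] at m2
          rw [eta_cons, etaC]
          rw [ih (strip t) (by omega), ih (strip (a :: t)) (by omega)]

/-- all weakly-decreasing lists with positive parts ≤ m and sum ≤ s (f = fuel) -/
def enum : ℕ → ℕ → ℕ → List (List ℕ)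
  | 0, _, _ => [[]]
  | _+1, 0, _ => [[]]
  | f+1, m+1, s =>
      if m+1 ≤ s then
        enum f m s ++ (enum f (m+1) (s-(m+1))).map (List.cons (m+1))
      else enum f m s

lemma nil_mem_enum : ∀ f m s, [] ∈ enum f m s := by
  intro f
  induction f with
  | zero => intro m s; simp [enum]
  | succ f ih =>
      intro m s
      match m with
      | 0 => simp [enum]
      | m+1 =>
          rw [enum]
          by_cases h : m+1 ≤ s <;> simp [h, ih]

lemma mem_enum : ∀ f m s (t : List ℕ), m + s < f → t.Pairwise (· ≥ ·) →
    (∀ x ∈ t, 0 < x ∧ x ≤ m) → t.sum ≤ s → t ∈ enum f m s := by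
  intro f
  induction f with
  | zero => intro m s t h1; omega
  | succ ms ih =>
      intro m s t h1 h2 h3 h4
      match m with
      | 0 =>
          match t with
          | [] => simp [enum]
          | x :: u =>
              have := h3 x (by simp)
              omega
      | m+1 =>
        match t with
        | [] => exact nil_mem_enum _ _ _
        | x :: u =>
            have hx := h3 x (by simp)
            have hxsum : x ≤ (x :: u).sum := by simp
            rcases Nat.eq_or_lt_of_le hx.2 with hxm | hxm
            · -- x = m+1 : go right
              have hms : m+1 ≤ s := by omega
              rw [enum, if_pos hms]
              apply List.mem_append_right
              apply List.mem_map.mpr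
              refine ⟨u, ?_, by rw [hxm]⟩
              apply ih (m+1) (s-(m+1)) u (by omega) (List.pairwise_cons.mp h2).2
                (fun y hy => h3 y (by simp [hy]))
              have : (x :: u).sum = x + u.sum := by simp
              omega
            · -- all parts ≤ m
              have hall : ∀ y ∈ x :: u, 0 < y ∧ y ≤ m := by
                intro y hy
                rcases List.mem_cons.mp hy with rfl | hy'
                · exact ⟨hx.1, by omega⟩
                · have h5 := (List.pairwise_cons.mp h2).1 y hy'
                  have h6 := h3 y hy
                  constructor
                  · exact h6.1
                  · omega
              have hmem : (x :: u) ∈ enum ms m s := ih m s (x :: u) (by omega) h2 hall h4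
              rw [enum]
              by_cases h : m+1 ≤ s
              · rw [if_pos h]; exact List.mem_append_left _ hmem
              · rw [if_neg h]; exact hmem

end Enumeration


/-- the induction invariant bound -/
def M2 (a k : ℕ) : ℤ :=
  if k = 0 then 2 * derange a
  else if k ≤ a - 1 then ((k:ℤ)+2) * ((a:ℤ)+(k:ℤ)) * derange (a-1) + 2
  else if k = a then 2*((a:ℤ)+2) * derange a + 2
  else 2 * derange (a-1) + ((a:ℤ)+2) * (2*((a:ℤ)+1) * derange (a-1) + 2)



section M2Facts

lemma M2_zero (a : ℕ) : M2 a 0 = 2 * derange a := by simp [M2]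

lemma M2_interior (a k : ℕ) (h1 : 1 ≤ k) (h2 : k ≤ a-1) :
    M2 a k = ((k:ℤ)+2) * ((a:ℤ)+(k:ℤ)) * derange (a-1) + 2 := by
  unfold M2
  rw [if_neg (by omega), if_pos h2]

lemma M2_diag (a : ℕ) (h : 1 ≤ a) : M2 a a = 2*((a:ℤ)+2) * derange a + 2 := by
  unfold M2
  rw [if_neg (by omega), if_neg (by omega), if_pos rfl]

lemma M2_top (a : ℕ) (h : 1 ≤ a) :
    M2 a (a+1) = 2 * derange (a-1) + ((a:ℤ)+2) * (2*((a:ℤ)+1) * derange (a-1) + 2) := by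
  unfold M2
  rw [if_neg (by omega), if_neg (by omega), if_neg (by omega)]

lemma M2_nonneg (a k : ℕ) : 0 ≤ M2 a k := by
  have h1 := derange_nonneg a
  have h2 := derange_nonneg (a-1)
  unfold M2
  split_ifs <;> positivity

-- interior-target core inequality
lemma core_E1 (b k k' : ℕ) (d s Dk : ℤ) (hk'1 : 1 ≤ k') (hk' : k' + 1 ≤ k) (hk : k ≤ b+6)
    (hd : 2*((b:ℤ)+5) + 13 ≤ d) (hs : -1 ≤ s) (hs' : s ≤ 1)
    (hDk : Dk ≤ d) (hDk0 : 0 ≤ Dk) :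
    2 * Dk + ((b:ℤ) + 7 + (k:ℤ) - (k':ℤ)) * (((k':ℤ)+2) * ((b:ℤ)+6+(k':ℤ)) * d + 2) ≤
    ((k:ℤ)+2) * ((b:ℤ)+7+(k:ℤ)) * (((b:ℤ)+6) * d + s) + 2 := by
  set B : ℤ := (b:ℤ) with hB
  set K : ℤ := (k:ℤ) with hK
  set K' : ℤ := (k':ℤ) with hK'
  have hu : (0:ℤ) ≤ K - K' - 1 := by
    have : (k' + 1 : ℤ) ≤ (k:ℤ) := by exact_mod_cast hk'
    simp only [hK, hK']; linarith
  have hv : (0:ℤ) ≤ B + 6 - K := by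
    have : (k:ℤ) ≤ (b:ℤ) + 6 := by exact_mod_cast hk
    simp only [hB, hK]; linarith
  have hw : (0:ℤ) ≤ K' - 1 := by
    have : (1:ℤ) ≤ (k':ℤ) := by exact_mod_cast hk'1
    simp only [hK']; linarith
  have hd0 : (0:ℤ) ≤ d := by linarith
  have hP1 : B + 8 ≤ (K+2)*(B+7+K)*(B+6) - (B+7+K-K')*(K'+2)*(B+6+K') := by
    nlinarith [hv, mul_nonneg hv hw, mul_nonneg hv hv, hu, mul_nonneg hu hw,
       mul_nonneg (mul_nonneg hu hw) hw, mul_nonneg hu hv, mul_nonneg (mul_nonneg hu hv) hw,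
       mul_nonneg (mul_nonneg hu hv) hv, mul_nonneg hu hu, mul_nonneg (mul_nonneg hu hu) hw,
       mul_nonneg (mul_nonneg hu hu) hv, mul_nonneg (mul_nonneg hu hu) hu]
  have hΔd : (B + 8) * d ≤ ((K+2)*(B+7+K)*(B+6) - (B+7+K-K')*(K'+2)*(B+6+K')) * d :=
    mul_le_mul_of_nonneg_right hP1 hd0
  have hsplus : (0:ℤ) ≤ (K+2)*(B+7+K)*(s+1) := by
    apply mul_nonneg
    · nlinarith [hu, hw, hv]
    · linarith
  have hvd : (0:ℤ) ≤ (B + 6 - K) * d := mul_nonneg hv hd0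
  nlinarith [hΔd, hsplus, hvd, hu, hw,
    mul_nonneg hv hw, mul_nonneg hv hu, mul_nonneg hv hv]

end M2Facts


lemma core_E2 (b k' : ℕ) (d s Dk : ℤ) (hk'1 : 1 ≤ k') (hk : k' ≤ b+5)
    (hd : 2*((b:ℤ)+5) + 13 ≤ d) (hs : -1 ≤ s) (hs' : s ≤ 1)
    (hDk : Dk ≤ d) (hDk0 : 0 ≤ Dk) :
    2 * Dk + (2*(b:ℤ)+14-(k':ℤ)) * (((k':ℤ)+2) * ((b:ℤ)+6+(k':ℤ)) * d + 2) ≤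
    2*((b:ℤ)+9) * (((b:ℤ)+7) * (((b:ℤ)+6)*d + s) - s) + 2 := by
  set B : ℤ := (b:ℤ) with hB
  set K' : ℤ := (k':ℤ) with hK'
  have hv : (0:ℤ) ≤ B + 5 - K' := by
    have : (k':ℤ) ≤ (b:ℤ) + 5 := by exact_mod_cast hk
    simp only [hB, hK']; linarith
  have hw : (0:ℤ) ≤ K' - 1 := by
    have : (1:ℤ) ≤ (k':ℤ) := by exact_mod_cast hk'1
    simp only [hK']; linarith
  have hb0 : (0:ℤ) ≤ B := by simp only [hB]; positivity
  have hd0 : (0:ℤ) ≤ d := by linarith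
  have hP2 : B + 19 ≤ 2*(B+9)*(B+7)*(B+6) - (2*B+14-K')*(K'+2)*(B+6+K') := by
    nlinarith [hv, hw, mul_nonneg hv hw, mul_nonneg (mul_nonneg hv hw) hw,
      mul_nonneg hv hv, mul_nonneg (mul_nonneg hv hv) hw, mul_nonneg (mul_nonneg hv hv) hv,
      mul_nonneg hw hw]
  have hΔd : (B + 19) * d ≤ (2*(B+9)*(B+7)*(B+6) - (2*B+14-K')*(K'+2)*(B+6+K')) * d :=
    mul_le_mul_of_nonneg_right hP2 hd0
  have hsplus : (0:ℤ) ≤ 2*(B+9)*(B+6)*(s+1) := by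
    apply mul_nonneg
    · nlinarith [hb0]
    · linarith
  have hlin : (B+17) * (2*(B+5)+13) ≤ (B+17) * d :=
    mul_le_mul_of_nonneg_left hd (by linarith)
  nlinarith [hΔd, hsplus, hlin, hw]

lemma core_E3 (b k' : ℕ) (d s Dk : ℤ) (hk'1 : 1 ≤ k') (hk : k' ≤ b+5)
    (hd : 2*((b:ℤ)+5) + 13 ≤ d) (hs : -1 ≤ s) (hs' : s ≤ 1)
    (hDk : Dk ≤ d) (hDk0 : 0 ≤ Dk) :
    2 * Dk + (2*(b:ℤ)+15-(k':ℤ)) * (((k':ℤ)+2) * ((b:ℤ)+6+(k':ℤ)) * d + 2) ≤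
    2 * (((b:ℤ)+6)*d + s) + ((b:ℤ)+9) * (2*((b:ℤ)+8) * (((b:ℤ)+6)*d + s) + 2) := by
  set B : ℤ := (b:ℤ) with hB
  set K' : ℤ := (k':ℤ) with hK'
  have hv : (0:ℤ) ≤ B + 5 - K' := by
    have : (k':ℤ) ≤ (b:ℤ) + 5 := by exact_mod_cast hk
    simp only [hB, hK']; linarith
  have hw : (0:ℤ) ≤ K' - 1 := by
    have : (1:ℤ) ≤ (k':ℤ) := by exact_mod_cast hk'1
    simp only [hK']; linarith
  have hb0 : (0:ℤ) ≤ B := by simp only [hB]; positivity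
  have hd0 : (0:ℤ) ≤ d := by linarith
  have hP3 : B + 20 ≤ (2 + 2*(B+9)*(B+8))*(B+6) - (2*B+15-K')*(K'+2)*(B+6+K') := by
    nlinarith [hv, hw, mul_nonneg hv hw, mul_nonneg (mul_nonneg hv hw) hw,
      mul_nonneg hv hv, mul_nonneg (mul_nonneg hv hv) hw, mul_nonneg (mul_nonneg hv hv) hv,
      mul_nonneg hw hw]
  have hΔd : (B + 20) * d ≤ ((2 + 2*(B+9)*(B+8))*(B+6) - (2*B+15-K')*(K'+2)*(B+6+K')) * d :=
    mul_le_mul_of_nonneg_right hP3 hd0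
  have hsplus : (0:ℤ) ≤ (2 + 2*(B+9)*(B+8))*(s+1) := by
    apply mul_nonneg
    · nlinarith [hb0]
    · linarith
  have hlin : (B+18) * (2*(B+5)+13) ≤ (B+18) * d :=
    mul_le_mul_of_nonneg_left hd (by linarith)
  nlinarith [hΔd, hsplus, hlin, hw]

lemma M2_closure (b k k' : ℕ) (hk1 : 1 ≤ k) (hka : k ≤ b+8) (hk' : k' + 1 ≤ k)
    (hked : k = b+7 → k' ≤ b+5) (hke : k = b+8 → k' ≤ b+6) :
    2 * derange k' + ((b:ℤ) + 7 + (k:ℤ) - (k':ℤ)) * M2 (b+6) k' ≤ M2 (b+7) k := by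
  have hd : 2*((b:ℤ)+5) + 13 ≤ derange (b+5) := derange_ge_lin (b+5) (by omega)
  have hd0 : (0:ℤ) ≤ derange (b+5) := by linarith
  have hDm1 : derange (b+6) = ((b:ℤ)+6) * derange (b+5) + (-1)^(b+6) := by
    rw [show b+6 = (b+5)+1 from rfl, derange_succ (b+5)]; push_cast; ring
  have hDa : derange (b+7) = ((b:ℤ)+7) * derange (b+6) - (-1)^(b+6) := by
    rw [show b+7 = (b+6)+1 from rfl, derange_succ (b+6)]
    rw [show ((-1:ℤ))^(b+6+1) = -(-1)^(b+6) by rw [pow_succ]; ring]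
    push_cast; ring
  have hs1 := neg_one_pow_bounds (b+6)
  have ha1 : b + 7 - 1 = b + 6 := by omega
  have ha2 : b + 6 - 1 = b + 5 := by omega
  by_cases hk'0 : k' = 0
  · subst hk'0
    rw [M2_zero]
    have hD1 : derange 0 = 1 := rfl
    rw [hD1]
    have hDm1nn : (0:ℤ) ≤ derange (b+6) := derange_nonneg _
    have hDm1ge1 : (1:ℤ) ≤ derange (b+6) := derange_ge_one _ (by omega)
    rcases Nat.lt_or_ge k (b+7) with hkc | hkc
    · -- k ≤ b+6, interior target
      rw [M2_interior (b+7) k hk1 (by omega), ha1]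
      have hkk : (1:ℤ) ≤ (k:ℤ) := by exact_mod_cast hk1
      have hkk2 : (k:ℤ) ≤ (b:ℤ)+6 := by exact_mod_cast (by omega : k ≤ b+6)
      push_cast
      nlinarith [mul_nonneg (mul_nonneg (by linarith : (0:ℤ) ≤ (k:ℤ)) (by linarith : (0:ℤ) ≤ (b:ℤ)+7+(k:ℤ))) hDm1nn]
    · rcases Nat.eq_or_lt_of_le hkc with hkc2 | hkc2
      · -- k = b+7, diag target
        have hkb : k = b+7 := hkc2.symm
        subst hkb
        rw [M2_diag (b+7) (by omega), hDa]
        have hb0 : (0:ℤ) ≤ (b:ℤ) := by positivity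
        push_cast
        nlinarith [mul_le_mul_of_nonneg_left hDm1ge1 (by nlinarith : (0:ℤ) ≤ 2*(b:ℤ)*(b:ℤ)+24*(b:ℤ)+94), hs1.1, hs1.2]
      · -- k = b+8, top target
        have hkc3 : k = b+8 := by omega
        subst hkc3
        rw [show b+8 = (b+7)+1 from rfl, M2_top (b+7) (by omega), ha1]
        have hb0 : (0:ℤ) ≤ (b:ℤ) := by positivity
        push_cast
        nlinarith [hDm1nn, hb0, mul_nonneg (mul_nonneg hb0 hb0) hDm1nn, mul_nonneg hb0 hDm1nn]
  · -- k' ≥ 1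
    have hk'1 : 1 ≤ k' := by omega
    by_cases hk'6 : k' = b+6
    · -- equality case: k = b+8 forced
      have hkeq : k = b+8 := by
        rcases Nat.eq_or_lt_of_le hka with h | h
        · exact h
        · exfalso
          rcases Nat.eq_or_lt_of_le (show k ≤ b+7 by omega) with h2 | h2
          · have := hked h2; omega
          · omega
      subst hkeq; subst hk'6
      rw [M2_diag (b+6) (by omega), show b+8 = (b+7)+1 from rfl, M2_top (b+7) (by omega), ha1]
      apply le_of_eq
      push_cast
      ring
    · -- 1 ≤ k' ≤ b+5
      have hk'5 : k' ≤ b+5 := by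
        rcases Nat.lt_or_ge k (b+7) with h | h
        · omega
        · rcases Nat.eq_or_lt_of_le h with h2 | h2
          · exact hked h2.symm
          · have := hke (by omega); omega
      have hDk : derange k' ≤ derange (b+5) := derange_mono hk'5 (by omega)
      have hDk0 : (0:ℤ) ≤ derange k' := derange_nonneg _
      rw [M2_interior (b+6) k' hk'1 (by omega), ha2]
      rcases Nat.lt_or_ge k (b+7) with hkc | hkc
      · rw [M2_interior (b+7) k hk1 (by omega), ha1, hDm1]
        exact core_E1 b k k' (derange (b+5)) ((-1)^(b+6)) (derange k') hk'1 hk'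
          (by omega) hd hs1.1 hs1.2 hDk hDk0
      · rcases Nat.eq_or_lt_of_le hkc with hkc2 | hkc2
        · have hkb7 : k = b + 7 := hkc2.symm
          subst hkb7
          rw [M2_diag (b+7) (by omega), hDa, hDm1]
          have := core_E2 b k' (derange (b+5)) ((-1)^(b+6)) (derange k') hk'1 hk'5
            hd hs1.1 hs1.2 hDk hDk0
          calc 2 * derange k' + ((b:ℤ) + 7 + ((b:ℕ)+7:ℕ) - (k':ℤ)) * (((k':ℤ)+2) * ((b:ℤ)+6+(k':ℤ)) * derange (b+5) + 2)
              = 2 * derange k' + (2*(b:ℤ)+14-(k':ℤ)) * (((k':ℤ)+2) * ((b:ℤ)+6+(k':ℤ)) * derange (b+5) + 2) := by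
                push_cast; ring
            _ ≤ 2*((b:ℤ)+9) * (((b:ℤ)+7) * (((b:ℤ)+6)*derange (b+5) + (-1)^(b+6)) - (-1)^(b+6)) + 2 := this
            _ = 2*((b:ℤ)+7+2) * (((b:ℤ)+7) * (((b:ℤ)+6)*derange (b+5) + (-1)^(b+6)) - (-1)^(b+6)) + 2 := by ring
        · have hkb8 : k = b + 8 := by omega
          subst hkb8
          rw [show b+8 = (b+7)+1 from rfl, M2_top (b+7) (by omega), ha1, hDm1]
          have := core_E3 b k' (derange (b+5)) ((-1)^(b+6)) (derange k') hk'1 hk'5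
            hd hs1.1 hs1.2 hDk hDk0
          calc 2 * derange k' + ((b:ℤ) + 7 + ((b:ℕ)+8:ℕ) - (k':ℤ)) * (((k':ℤ)+2) * ((b:ℤ)+6+(k':ℤ)) * derange (b+5) + 2)
              = 2 * derange k' + (2*(b:ℤ)+15-(k':ℤ)) * (((k':ℤ)+2) * ((b:ℤ)+6+(k':ℤ)) * derange (b+5) + 2) := by
                push_cast; ring
            _ ≤ 2 * (((b:ℤ)+6)*derange (b+5) + (-1)^(b+6)) + ((b:ℤ)+9) * (2*((b:ℤ)+8) * (((b:ℤ)+6)*derange (b+5) + (-1)^(b+6)) + 2) := this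
            _ = 2 * (((b:ℤ)+6)*derange (b+5) + (-1)^(b+6)) + (((b:ℤ)+7)+2) * (2*(((b:ℤ)+7)+1) * (((b:ℤ)+6)*derange (b+5) + (-1)^(b+6)) + 2) := by ring


lemma M2_lt_bound (b k : ℕ) (hk : k ≤ b+8) :
    M2 (b+7) k < 2 * (((b:ℤ)+7+(k:ℤ)) * derange (b+7) + (-1)^(b+7+1)) := by
  have hsgn : ((-1:ℤ))^(b+7+1) = (-1)^(b+6) := by
    rw [show b+7+1 = (b+6)+2 from rfl, pow_add]; norm_num
  rw [hsgn]
  have hs := neg_one_pow_bounds (b+6)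
  have hDm1 : derange (b+6) = ((b:ℤ)+6) * derange (b+5) + (-1)^(b+6) := by
    rw [show b+6 = (b+5)+1 from rfl, derange_succ (b+5)]; push_cast; ring
  have hDa : derange (b+7) = ((b:ℤ)+7) * derange (b+6) - (-1)^(b+6) := by
    rw [show b+7 = (b+6)+1 from rfl, derange_succ (b+6)]
    rw [show ((-1:ℤ))^(b+6+1) = -(-1)^(b+6) by rw [pow_succ]; ring]
    push_cast; ring
  have hDm1ge1 : (1:ℤ) ≤ derange (b+6) := derange_ge_one _ (by omega)
  have hDage1 : (1:ℤ) ≤ derange (b+7) := derange_ge_one _ (by omega)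
  have hb0 : (0:ℤ) ≤ (b:ℤ) := by positivity
  have ha1 : b + 7 - 1 = b + 6 := by omega
  rcases Nat.eq_or_lt_of_le (Nat.zero_le k) with hk0 | hk1
  · subst hk0
    rw [M2_zero]
    push_cast
    nlinarith [hs.1, mul_le_mul_of_nonneg_left hDage1 (by linarith : (0:ℤ) ≤ 2*(b:ℤ)+12)]
  · rcases Nat.lt_or_ge k (b+7) with hkc | hkc
    · rw [M2_interior (b+7) k (by omega) (by omega), ha1]
      have hkk : (1:ℤ) ≤ (k:ℤ) := by exact_mod_cast hk1
      have hkk2 : (k:ℤ) ≤ (b:ℤ)+6 := by exact_mod_cast (by omega : k ≤ b+6)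
      rw [hDa]
      push_cast
      nlinarith [hs.1, hs.2, hDm1ge1,
        mul_nonneg (mul_nonneg (by linarith : (0:ℤ) ≤ (b:ℤ)+7+(k:ℤ)) (by linarith : (0:ℤ) ≤ (b:ℤ)+6-(k:ℤ))) (by linarith : (0:ℤ) ≤ derange (b+6)),
        mul_le_mul_of_nonneg_left hDm1ge1 (by nlinarith : (0:ℤ) ≤ ((b:ℤ)+7+(k:ℤ)) * ((b:ℤ)+5) - 2)]
    · rcases Nat.eq_or_lt_of_le hkc with hkc2 | hkc2
      · have hkb : k = b+7 := hkc2.symm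
        subst hkb
        rw [M2_diag (b+7) (by omega)]
        push_cast
        nlinarith [hs.1, mul_le_mul_of_nonneg_left hDage1 (by linarith : (0:ℤ) ≤ 2*(b:ℤ)+10)]
      · have hkb : k = b+8 := by omega
        subst hkb
        rw [show b+8 = (b+7)+1 from rfl, M2_top (b+7) (by omega), ha1, hDa, hDm1]
        push_cast
        nlinarith [hs.1, hs.2, hDm1ge1, hb0, derange_ge_lin (b+5) (by omega),
          mul_le_mul_of_nonneg_left hDm1ge1 (by nlinarith : (0:ℤ) ≤ 2*(b:ℤ)*(b:ℤ)+18*(b:ℤ)+32)]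

lemma lemmaB : ∀ N a (t : List ℕ), (a :: t).Pairwise (· ≥ ·) → (∀ x ∈ a :: t, 0 < x) →
    a + t.sum = N → t.sum ≤ a + 1 → 2*|eta (a :: t)| ≤ M2 a t.sum := by
  intro N
  induction N using Nat.strong_induction_on with
  | _ N IH =>
    intro a t hsort hpos hsum hclass
    have ha : 0 < a := hpos a (by simp)
    have hub : ∀ x ∈ t, x ≤ a := fun x hx => (List.pairwise_cons.mp hsort).1 x hx
    have hupos : ∀ x ∈ t, 0 < x := fun x hx => hpos x (by simp [hx])
    have husort : t.Pairwise (· ≥ ·) := (List.pairwise_cons.mp hsort).2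
    rcases Nat.lt_or_ge a 7 with ha6 | ha7
    · -- small case: enumeration + decide
      have ht : t ∈ enum 20 a (a+1) :=
        mem_enum 20 a (a+1) t (by omega) husort (fun x hx => ⟨hupos x hx, hub x hx⟩) hclass
      have hdec : ∀ a' ∈ [1,2,3,4,5,6], ∀ t' ∈ enum 20 a' (a'+1),
          2*|etaC 40 (a' :: t')| ≤ M2 a' t'.sum := by decide
      have hamem : a ∈ [1,2,3,4,5,6] := by
        interval_cases a <;> simp
      have hres := hdec a hamem t ht
      have hlen : t.length ≤ t.sum := length_le_sum hupos
      have heq : etaC 40 (a :: t) = eta (a :: t) := by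
        apply etaC_eq
        simp only [List.sum_cons, List.length_cons]
        omega
      rwa [heq] at hres
    · -- large case
      obtain ⟨b, rfl⟩ : ∃ b, a = b + 7 := ⟨a - 7, by omega⟩
      match t with
      | [] =>
          simp only [List.sum_nil]
          rw [M2_zero]
          have : eta [b+7] = derange (b+7) := eta_row (b+6)
          rw [this, abs_of_nonneg (derange_nonneg _)]
      | v :: w =>
          have hk1 : 1 ≤ (v :: w).sum := by
            have := hupos v (by simp)
            simp only [List.sum_cons]
            omega
          by_cases hpair : v = b + 7 ∧ w = []
          · -- the (a,a) case
            obtain ⟨rfl, rfl⟩ := hpair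
            have hp := eta_pair (b+6)
            have hsum' : ([b+7] : List ℕ).sum = b+7 := by simp
            rw [show ((b+6)+1) = b+7 from rfl] at hp
            rw [hsum', M2_diag (b+7) (by omega), hp]
            rw [abs_mul, abs_pow, abs_neg, abs_one, one_pow, one_mul]
            have hnn : (0:ℤ) ≤ ((b:ℤ)+6+3) * derange (b+7) :=
              mul_nonneg (by positivity) (derange_nonneg _)
            have hsb := neg_one_pow_bounds (b+6+2)
            have h1 : |((b:ℤ)+6+3) * derange (b+7) + (-1)^(b+6+2)| ≤ ((b:ℤ)+6+3) * derange (b+7) + 1 := by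
              rw [abs_le]
              constructor <;> nlinarith
            push_cast at h1 ⊢
            nlinarith [h1]
          · -- generic recurrence case
            set t := v :: w with htdef
            set k := t.sum with hkdef
            have hlen1 : 1 ≤ t.length := by simp [htdef]
            have hks : (strip t).sum + t.length = k := strip_sum hupos
            set k' := (strip t).sum with hk'def
            have hk' : k' + 1 ≤ k := by omega
            have hstripc : strip ((b+7) :: t) = (b+6) :: strip t := strip_cons (by omega)
            -- the exceptional length-1 configurations are impossible here
            have hked : k = b+7 → k' ≤ b+5 := by
              intro hkb
              by_contra hcon
              have hlen2 : t.length = 1 := by omega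
              have hwnil : w = [] := by
                have hwl : w.length = 0 := by
                  simp only [htdef, List.length_cons] at hlen2
                  omega
                exact List.length_eq_zero_iff.mp hwl
              have hv : v = b+7 := by
                have : t.sum = v + w.sum := by simp [htdef]
                rw [hwnil] at this
                simp at this
                omega
              exact hpair ⟨hv, hwnil⟩
            have hke : k = b+8 → k' ≤ b+6 := by
              intro hkb
              by_contra hcon
              have hlen2 : t.length = 1 := by omega
              have hwnil : w = [] := by
                have hwl : w.length = 0 := by
                  simp only [htdef, List.length_cons] at hlen2
                  omega
                exact List.length_eq_zero_iff.mp hwl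
              have hv : v = b+8 := by
                have : t.sum = v + w.sum := by simp [htdef]
                rw [hwnil] at this
                simp at this
                omega
              have := hub v (by simp [htdef])
              omega
            -- Lemma A on the stripped tail
            have hA : |eta (strip t)| ≤ derange k' :=
              eta_abs_le k' (strip t) (strip_sorted husort) strip_pos hk'def.symm
            -- induction hypothesis on the column-stripped partition
            have hIH : 2*|eta ((b+6) :: strip t)| ≤ M2 (b+6) (strip t).sum := by
              apply IH ((b+6) + (strip t).sum) (by omega)
              · apply List.pairwise_cons.mpr
                constructor
                · intro y hy
                  have := strip_bound hub y hy
                  omega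
                · exact strip_sorted husort
              · intro x hx
                rcases List.mem_cons.mp hx with rfl | hx
                · omega
                · exact strip_pos x hx
              · rfl
              · omega
            have hbound := eta_abs_cons_le (b+7) t
            rw [hstripc] at hbound
            have hh0 : (0:ℤ) ≤ ((b+7:ℕ):ℤ) + (t.length:ℤ) := by positivity
            have hcomb : 2*|eta ((b+7) :: t)| ≤
                2*derange k' + (((b+7:ℕ):ℤ) + (t.length:ℤ)) * M2 (b+6) k' := by
              have h1 : (((b+7:ℕ):ℤ) + (t.length:ℤ)) * (2*|eta ((b+6) :: strip t)|) ≤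
                  (((b+7:ℕ):ℤ) + (t.length:ℤ)) * M2 (b+6) k' := by
                apply mul_le_mul_of_nonneg_left _ hh0
                rw [hk'def]
                exact hIH
              nlinarith [hbound, hA, abs_nonneg (eta ((b+6) :: strip t))]
            have hcast : (((b+7:ℕ):ℤ) + (t.length:ℤ)) = (b:ℤ) + 7 + (k:ℤ) - (k':ℤ) := by
              have : k' + t.length = k := hks
              push_cast
              omega
            rw [hcast] at hcomb
            refine le_trans hcomb ?_
            exact M2_closure b k k' hk1 (by omega) hk' hked hke


lemma hook_value (n a : ℕ) (ha : 1 ≤ a) (han : a + 1 ≤ n) :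
    |eta ((a+1) :: List.replicate (n-(a+1)) 1)| = ((n:ℤ)) * derange a + (-1)^(a+1) := by
  have h := eta_hook n (a+1) (by omega) han
  have ha1 : a + 1 - 1 = a := by omega
  rw [ha1] at h
  rw [h, abs_mul, abs_pow, abs_neg, abs_one, one_pow, one_mul]
  rcases Nat.even_or_odd a with he | ho
  ·
    have ha2 : 2 ≤ a := by
      rcases he with ⟨c, hc⟩
      omega
    have hD1 : (1:ℤ) ≤ derange a := derange_ge_one a (by omega)
    have hsgn : ((-1:ℤ))^(a+1) = -1 := by
      rw [pow_succ, he.neg_one_pow]; ring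
    rw [hsgn]
    have hn3 : (3:ℤ) ≤ (n:ℤ) := by exact_mod_cast (by omega : 3 ≤ n)
    rw [abs_of_nonpos (by nlinarith : (1:ℤ) + (-1) * (n:ℤ) * derange a ≤ 0)]
    ring
  · have hsgn : ((-1:ℤ))^(a+1) = 1 := by
      rw [pow_succ, ho.neg_one_pow]; ring
    rw [hsgn]
    have hD0 : (0:ℤ) ≤ derange a := derange_nonneg a
    have hn0 : (0:ℤ) ≤ (n:ℤ) := by positivity
    rw [abs_of_nonneg (by nlinarith : (0:ℤ) ≤ 1 + 1 * (n:ℤ) * derange a)]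
    ring

lemma rhs_ident (n a : ℕ) :
    derange (a+1) + ((n : ℤ) - a - 1) * derange a = (n:ℤ) * derange a + (-1)^(a+1) := by
  rw [derange_succ a]
  push_cast
  ring


/-- For `n ≥ 3` and `λ ⊢ n` with `2λ₁ ≥ n-1`, excluding `(n/2, n/2)` for even `n` and
three-part partitions with first part `(n-1)/2` for odd `n`:
`|η_λ| < D_{λ₁+1} + (n-λ₁-1) D_{λ₁}` (computed in `ℤ`); when `λ₁ ≤ n-1` the right-hand
side equals `|η_{(λ₁+1,1^{n-λ₁-1})}|`. -/
theorem eta_abs_strict_upper_bound (n : ℕ) (hn : 3 ≤ n)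
    (l : List ℕ) (hl : IsPartition n l) (h1 : n - 1 ≤ 2 * l.headI)
    (he : Even n → l ≠ [n / 2, n / 2])
    (ho : Odd n → ¬(l.length = 3 ∧ l.headI = (n - 1) / 2)) :
    |eta l| < derange (l.headI + 1) + ((n : ℤ) - l.headI - 1) * derange l.headI ∧
    (l.headI ≤ n - 1 →
      |eta (hookP n (l.headI + 1))| =
        derange (l.headI + 1) + ((n : ℤ) - l.headI - 1) * derange l.headI) := by
  obtain ⟨hsort, hpos, hsum⟩ := hl
  match l, hsort, hpos, hsum, h1, he, ho with
  | [], _, _, hsum, _, _, _ => simp at hsum; omega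
  | a :: t, hsort, hpos, hsum, h1, he, ho =>
    simp only [List.headI_cons] at h1 he ho ⊢
    have ha : 0 < a := hpos a (by simp)
    have hsum' : a + t.sum = n := by simpa using hsum
    have hclass : t.sum ≤ a + 1 := by omega
    have hupos : ∀ x ∈ t, 0 < x := fun x hx => hpos x (by simp [hx])
    have husort : t.Pairwise (· ≥ ·) := (List.pairwise_cons.mp hsort).2
    have hub : ∀ x ∈ t, x ≤ a := fun x hx => (List.pairwise_cons.mp hsort).1 x hx
    constructor
    · -- strict inequality
      rw [rhs_ident n a]
      rcases Nat.lt_or_ge a 7 with ha6 | ha7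
      · -- small case by enumeration
        have ht : t ∈ enum 20 a (a+1) :=
          mem_enum 20 a (a+1) t (by omega) husort (fun x hx => ⟨hupos x hx, hub x hx⟩) hclass
        have hdec : ∀ a' ∈ [1,2,3,4,5,6], ∀ t' ∈ enum 20 a' (a'+1),
            3 ≤ a' + t'.sum →
            ((a'+t'.sum) % 2 = 0 → (a'::t') ≠ [(a'+t'.sum)/2, (a'+t'.sum)/2]) →
            ((a'+t'.sum) % 2 = 1 → ¬((a'::t').length = 3 ∧ a' = (a'+t'.sum-1)/2)) →
            2*|etaC 40 (a'::t')| < 2*(((a'+t'.sum : ℕ):ℤ) * derange a' + (-1)^(a'+1)) := by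
          decide
        have hamem : a ∈ [1,2,3,4,5,6] := by interval_cases a <;> simp
        have hres := hdec a hamem t ht (by omega)
          (by
            intro hev
            rw [hsum']
            exact he (Nat.even_iff.mpr (by omega)))
          (by
            intro hod
            rw [hsum']
            exact ho (Nat.odd_iff.mpr (by omega)))
        have hlen : t.length ≤ t.sum := length_le_sum hupos
        have heq : etaC 40 (a :: t) = eta (a :: t) := by
          apply etaC_eq
          simp only [List.sum_cons, List.length_cons]
          omega
        rw [heq, hsum'] at hres
        linarith
      · -- large case
        obtain ⟨b, rfl⟩ : ∃ b, a = b + 7 := ⟨a - 7, by omega⟩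
        have hB := lemmaB n (b+7) t hsort hpos hsum' hclass
        have hM := M2_lt_bound b t.sum (by omega)
        have hcast : ((n:ℕ):ℤ) = ((b:ℤ)+7+(t.sum:ℤ)) := by
          exact_mod_cast hsum'.symm
        rw [hcast]
        linarith
    · -- hook value
      intro han
      show |eta ((a+1) :: List.replicate (n-(a+1)) 1)| = _
      rw [rhs_ident n a]
      exact hook_value n a ha (by omega)
end
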